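/- Assume the primal-dual pair {(P),(D)} (with data c ∈ X*, b ∈ Y*) is consistent, and let v be the value of the game G = (α,β,A) for some α ∈ int C*, β ∈ int K*. If v = 0 and either B^I ∩ c^⊥ = ∅ or B^II ∩ b^⊥ = ∅ (where B^I, B^II are the sets of optimal strategies of players I and II, c^⊥ := {x ∈ X : ⟨c,x⟩ = 0}, b^⊥ := {y ∈ Y : ⟨y,b⟩ = 0}), then at least one of (P), (D) is strictly feasible; in fact val(P) = val(D), and at least one of the sets of optimal solutions S(P), S(D) is nonempty, convex, and bounded. -/

import Mathlib

set_option synthInstance.maxHeartbeats 1000000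
set_option maxHeartbeats 4000000

open Set

lemma ray_le {p q : ℝ} (h : ∀ t : ℝ, 0 < t → t * p ≤ q) : p ≤ 0 := by
  by_contra hp
  push_neg at hp
  have ht : (0:ℝ) < (max 0 q + 1) / p := by positivity
  have h2 := h _ ht
  rw [div_mul_cancel₀ _ (ne_of_gt hp)] at h2
  linarith [le_max_right 0 q]

lemma coercive_of_mem_interior {E : Type*} [NormedAddCommGroup E] [NormedSpace ℝ E]
    {C : Set E} {α : E →L[ℝ] ℝ}
    (hα : α ∈ interior {w : E →L[ℝ] ℝ | ∀ x ∈ C, 0 ≤ w x}) :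
    ∃ ε > (0:ℝ), ∀ x ∈ C, ε * ‖x‖ ≤ α x := by
  rw [mem_interior_iff_mem_nhds, Metric.mem_nhds_iff] at hα
  obtain ⟨ε, hε, hball⟩ := hα
  refine ⟨ε/2, by positivity, fun x hx => ?_⟩
  rcases eq_or_ne x 0 with rfl | hx0
  · simp
  obtain ⟨g, hg1, hgx⟩ := exists_dual_vector ℝ x (norm_ne_zero_iff.mpr hx0)
  have hmem : α - (ε/2) • g ∈ {w : E →L[ℝ] ℝ | ∀ x ∈ C, 0 ≤ w x} := by
    apply hball
    rw [Metric.mem_ball, dist_eq_norm]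
    have h1 : α - (ε/2) • g - α = -((ε/2) • g) := by abel
    rw [h1, norm_neg]
    have h2 : ‖(ε/2) • g‖ ≤ ‖(ε/2 : ℝ)‖ * ‖g‖ := ContinuousLinearMap.opNorm_smul_le _ _
    rw [hg1] at h2
    have h3 : ‖(ε/2 : ℝ)‖ = ε/2 := by
      rw [Real.norm_eq_abs, abs_of_pos]; positivity
    rw [h3] at h2; linarith
  have h3 := hmem x hx
  simp only [ContinuousLinearMap.sub_apply, ContinuousLinearMap.smul_apply] at h3
  have hgx' : g x = ‖x‖ := by exact_mod_cast hgx
  rw [hgx'] at h3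
  simp only [smul_eq_mul] at h3
  linarith

lemma mem_of_dual_nonneg {E : Type*} [NormedAddCommGroup E] [NormedSpace ℝ E]
    {C : Set E} (hCconv : Convex ℝ C) (hCclosed : IsClosed C) (hC0 : (0:E) ∈ C)
    (hCcone : ∀ r : ℝ, 0 ≤ r → ∀ x ∈ C, r • x ∈ C)
    {x : E} (hx : ∀ w : E →L[ℝ] ℝ, (∀ a ∈ C, 0 ≤ w a) → 0 ≤ w x) : x ∈ C := by
  by_contra h
  obtain ⟨f, u, hfC, hfx⟩ := geometric_hahn_banach_closed_point hCconv hCclosed h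
  have hu : 0 < u := by simpa using hfC 0 hC0
  have hfa : ∀ a ∈ C, f a ≤ 0 := by
    intro a ha
    have key : ∀ t : ℝ, 0 < t → t * f a ≤ u := by
      intro t ht
      have := hfC (t • a) (hCcone t ht.le a ha)
      simpa [map_smul, smul_eq_mul] using this.le
    exact ray_le key
  have h4 := hx (-f) (fun a ha => by simpa using hfa a ha)
  simp only [ContinuousLinearMap.neg_apply, neg_nonneg] at h4
  linarith

lemma cone_add {E : Type*} [AddCommGroup E] [Module ℝ E] {C : Set E}
    (hCcone : ∀ r : ℝ, 0 ≤ r → ∀ x ∈ C, r • x ∈ C) (hCconv : Convex ℝ C)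
    {a b : E} (ha : a ∈ C) (hb : b ∈ C) : a + b ∈ C := by
  have h := hCconv ha hb (by norm_num : (0:ℝ) ≤ 1/2) (by norm_num : (0:ℝ) ≤ 1/2) (by norm_num)
  have h2 := hCcone 2 (by norm_num) _ h
  have : (2:ℝ) • ((1/2:ℝ) • a + (1/2:ℝ) • b) = a + b := by
    rw [smul_add, smul_smul, smul_smul]; norm_num
  rwa [this] at h2
/-- If the game-theoretic condition holds (every nonzero `x ∈ C` with `A x` nonnegative
on `K` has `c x ≠ 0`), and both programs are feasible, then (D) is strictly feasible. -/
lemma strictFeasD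
    {X Y : Type*} [NormedAddCommGroup X] [NormedSpace ℝ X]
    [NormedAddCommGroup Y] [NormedSpace ℝ Y]
    (hXrefl : Function.Surjective (NormedSpace.inclusionInDoubleDual ℝ X))
    (A : X →L[ℝ] (Y →L[ℝ] ℝ))
    (C : Set X) (K : Set Y)
    (hCcone : ∀ (r : ℝ), 0 ≤ r → ∀ x ∈ C, r • x ∈ C) (hCconv : Convex ℝ C)
    (hCclosed : IsClosed C)
    (hKcone : ∀ (r : ℝ), 0 ≤ r → ∀ y ∈ K, r • y ∈ K) (hKconv : Convex ℝ K)
    (c : X →L[ℝ] ℝ) (b : Y →L[ℝ] ℝ)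
    (α : X →L[ℝ] ℝ) (hα : α ∈ interior {w : X →L[ℝ] ℝ | ∀ x ∈ C, 0 ≤ w x})
    (x₀ : X) (hx₀C : x₀ ∈ C) (hx₀ : ∀ y ∈ K, 0 ≤ (A x₀ - b) y)
    (y₀ : Y) (hy₀K : y₀ ∈ K) (hy₀ : ∀ x ∈ C, 0 ≤ (-(A.flip y₀) + c) x)
    (hkey : ∀ x ∈ C, x ≠ 0 → (∀ y ∈ K, 0 ≤ A x y) → c x ≠ 0) :
    ∃ y ∈ K, (-(A.flip y) + c) ∈ interior {w : X →L[ℝ] ℝ | ∀ x ∈ C, 0 ≤ w x} := by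
  by_contra hcon
  push_neg at hcon
  set Cs : Set (X →L[ℝ] ℝ) := {w : X →L[ℝ] ℝ | ∀ x ∈ C, 0 ≤ w x} with hCs
  have hCsconv : Convex ℝ Cs := by
    intro w₁ h1 w₂ h2 a b' ha hb hab x hx
    simp only [ContinuousLinearMap.add_apply, ContinuousLinearMap.smul_apply, smul_eq_mul]
    exact add_nonneg (mul_nonneg ha (h1 x hx)) (mul_nonneg hb (h2 x hx))
  have h0C : (0:X) ∈ C := by simpa using hCcone 0 le_rfl x₀ hx₀C
  have h0K : (0:Y) ∈ K := by simpa using hKcone 0 le_rfl y₀ hy₀K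
  -- the image set t
  set t : Set (X →L[ℝ] ℝ) := (fun y => -(A.flip y) + c) '' K with ht
  have htconv : Convex ℝ t := by
    rintro _ ⟨y₁, hy₁, rfl⟩ _ ⟨y₂, hy₂, rfl⟩ a b' ha hb hab
    refine ⟨a • y₁ + b' • y₂, hKconv hy₁ hy₂ ha hb hab, ?_⟩
    ext x
    have e1 : (A.flip (a • y₁ + b' • y₂)) x = a * (A.flip y₁ x) + b' * (A.flip y₂ x) := by
      simp [map_add, map_smul]
    simp only [ContinuousLinearMap.add_apply, ContinuousLinearMap.neg_apply,
      ContinuousLinearMap.smul_apply, smul_eq_mul, e1]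
    have hb1 : b' = 1 - a := by linarith
    subst hb1; ring
  have hdisj : Disjoint (interior Cs) t := by
    rw [Set.disjoint_left]
    rintro w hw ⟨y, hy, rfl⟩
    exact hcon y hy hw
  obtain ⟨f, u, hf1, hf2⟩ :=
    geometric_hahn_banach_open (hCsconv.interior) isOpen_interior htconv hdisj
  obtain ⟨xh, hxh⟩ := hXrefl f
  have hfw : ∀ w : X →L[ℝ] ℝ, f w = w xh := by
    intro w; rw [← hxh]; rfl
  -- ball around α
  have hα' := hα
  rw [hCs] at hα'
  obtain ⟨ε, hε, hball⟩ : ∃ ε > (0:ℝ), Metric.ball α ε ⊆ Cs := by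
    rw [mem_interior_iff_mem_nhds, Metric.mem_nhds_iff] at hα
    obtain ⟨ε, hε, h⟩ := hα; exact ⟨ε, hε, h⟩
  -- key1 : ∀ w ∈ Cs, w xh ≤ 0
  have key1 : ∀ w ∈ Cs, w xh ≤ 0 := by
    intro w hw
    have hmem : ∀ s : ℝ, 0 < s → (α + s • w) ∈ interior Cs := by
      intro s hs
      rw [mem_interior]
      refine ⟨Metric.ball (α + s • w) ε, fun g hg => ?_, Metric.isOpen_ball, Metric.mem_ball_self hε⟩
      have hg' : g - s • w ∈ Metric.ball α ε := by
        rw [Metric.mem_ball, dist_eq_norm] at hg ⊢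
        have : g - s • w - α = g - (α + s • w) := by abel
        rw [this]; exact hg
      intro x hx
      have h1 : 0 ≤ (g - s • w) x := hball hg' x hx
      have h2 : 0 ≤ s * w x := mul_nonneg hs.le (hw x hx)
      simp only [ContinuousLinearMap.sub_apply, ContinuousLinearMap.smul_apply, smul_eq_mul] at h1
      linarith
    have hray : ∀ s : ℝ, 0 < s → s * (w xh) ≤ u - α xh := by
      intro s hs
      have := hf1 _ (hmem s hs)
      rw [hfw] at this
      simp only [ContinuousLinearMap.add_apply, ContinuousLinearMap.smul_apply, smul_eq_mul] at this
      linarith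
    have := ray_le hray
    linarith [this]
  -- 0 ≤ u
  have hαxh : α xh < u := by
    have := hf1 α hα; rwa [hfw] at this
  have hu0 : 0 ≤ u := by
    have hmem : ∀ s : ℝ, 0 < s → (s • α) ∈ interior Cs := by
      intro s hs
      rw [mem_interior]
      refine ⟨Metric.ball (s • α) (s * ε), fun g hg => ?_, Metric.isOpen_ball, ?_⟩
      · intro x hx
        have hg' : s⁻¹ • g ∈ Metric.ball α ε := by
          rw [Metric.mem_ball, dist_eq_norm] at hg ⊢
          have h1 : s⁻¹ • g - α = s⁻¹ • (g - s • α) := by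
            rw [smul_sub, smul_smul, inv_mul_cancel₀ hs.ne', one_smul]
          rw [h1]
          have h2 : ‖s⁻¹ • (g - s • α)‖ ≤ ‖(s⁻¹:ℝ)‖ * ‖g - s • α‖ :=
            ContinuousLinearMap.opNorm_smul_le _ _
          have h3 : ‖(s⁻¹:ℝ)‖ = s⁻¹ := by
            rw [Real.norm_eq_abs, abs_of_pos (inv_pos.mpr hs)]
          rw [h3] at h2
          calc ‖s⁻¹ • (g - s • α)‖ ≤ s⁻¹ * ‖g - s • α‖ := h2
            _ < s⁻¹ * (s * ε) := by
                exact mul_lt_mul_of_pos_left hg (inv_pos.mpr hs)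
            _ = ε := by field_simp
        have h4 : 0 ≤ (s⁻¹ • g) x := hball hg' x hx
        simp only [ContinuousLinearMap.smul_apply, smul_eq_mul] at h4
        have h5 : 0 ≤ s * (s⁻¹ * g x) := mul_nonneg hs.le h4
        rw [← mul_assoc, mul_inv_cancel₀ hs.ne', one_mul] at h5
        exact h5
      · exact Metric.mem_ball_self (mul_pos hs hε)
    have hray : ∀ s : ℝ, 0 < s → s * (α xh) ≤ u := by
      intro s hs
      have := hf1 _ (hmem s hs)
      rw [hfw] at this
      simp only [ContinuousLinearMap.smul_apply, smul_eq_mul] at this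
      linarith
    rcases le_or_gt 0 (α xh) with h | h
    · nlinarith [hray 1 one_pos]
    · by_contra hu
      push_neg at hu
      have hs : 0 < u / (2 * α xh) := div_pos_of_neg_of_neg hu (by linarith)
      have h5 := hray _ hs
      have h6 : u / (2 * α xh) * α xh = u / 2 := by
        rw [div_mul_eq_mul_div, mul_comm (2:ℝ) (α xh), ← div_div, mul_div_assoc,
          div_self (ne_of_lt h), mul_one]
      linarith
  -- from the separation on t : u ≤ c xh - A xh y for y ∈ K
  have hub : ∀ y ∈ K, u ≤ c xh - A xh y := by
    intro y hy
    have := hf2 _ ⟨y, hy, rfl⟩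
    rw [hfw] at this
    simp only [ContinuousLinearMap.add_apply, ContinuousLinearMap.neg_apply,
      ContinuousLinearMap.flip_apply] at this
    linarith
  have hcxh : u ≤ c xh := by
    have := hub 0 h0K
    simpa using this
  have hAneg : ∀ y ∈ K, A xh y ≤ 0 := by
    intro y hy
    have hray : ∀ s : ℝ, 0 < s → s * (A xh y) ≤ c xh - u := by
      intro s hs
      have := hub (s • y) (hKcone s hs.le y hy)
      have e : A xh (s • y) = s * A xh y := by simp [map_smul]
      rw [e] at this
      linarith
    exact ray_le hray
  have hxhne : xh ≠ 0 := by
    intro h0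
    have h1 : (0:ℝ) < u := by
      have := hf1 α hα
      rw [hfw, h0] at this
      simpa using this
    have h2 : u ≤ 0 := by
      have := hcxh
      rw [h0] at this
      simpa using this
    linarith
  set xt : X := -xh with hxt
  have hxtC : xt ∈ C := by
    apply mem_of_dual_nonneg hCconv hCclosed h0C hCcone
    intro w hw
    have := key1 w hw
    simp only [hxt, map_neg]
    linarith
  have hxtne : xt ≠ 0 := by
    simp only [hxt, ne_eq, neg_eq_zero]
    exact hxhne
  have hAxt : ∀ y ∈ K, 0 ≤ A xt y := by
    intro y hy
    have := hAneg y hy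
    simp only [hxt, map_neg, ContinuousLinearMap.neg_apply]
    linarith
  have hcxt : c xt ≤ 0 := by
    have h1 : 0 ≤ u := hu0
    simp only [hxt, map_neg]
    linarith
  have hcne := hkey xt hxtC hxtne hAxt
  have hcneg : c xt < 0 := lt_of_le_of_ne hcxt hcne
  -- weak duality contradiction
  have wd : ∀ x, x ∈ C → (∀ y ∈ K, 0 ≤ (A x - b) y) → b y₀ ≤ c x := by
    intro x hxC hfeas
    have h1 := hy₀ x hxC
    have h2 := hfeas y₀ hy₀K
    simp only [ContinuousLinearMap.add_apply, ContinuousLinearMap.neg_apply,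
      ContinuousLinearMap.flip_apply, ContinuousLinearMap.sub_apply] at h1 h2
    linarith
  have wd0 : b y₀ ≤ c x₀ := wd x₀ hx₀C hx₀
  set s : ℝ := (b y₀ - c x₀ - 1) / (c xt) with hsdef
  have hspos : 0 < s := div_pos_of_neg_of_neg (by linarith) hcneg
  set x₁ : X := x₀ + s • xt with hx₁
  have hx₁C : x₁ ∈ C := cone_add hCcone hCconv hx₀C (hCcone s hspos.le xt hxtC)
  have hx₁feas : ∀ y ∈ K, 0 ≤ (A x₁ - b) y := by
    intro y hy
    have h1 := hx₀ y hy
    have h2 := hAxt y hy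
    simp only [hx₁, map_add, map_smul, ContinuousLinearMap.sub_apply,
      ContinuousLinearMap.add_apply, ContinuousLinearMap.smul_apply, smul_eq_mul] at h1 h2 ⊢
    nlinarith
  have := wd x₁ hx₁C hx₁feas
  have hcx₁ : c x₁ = c x₀ + s * c xt := by
    simp [hx₁, map_add, map_smul]
  have hs2 : s * c xt = b y₀ - c x₀ - 1 := by
    rw [hsdef]
    field_simp
  rw [hcx₁, hs2] at this
  linarith
/-- Strong duality: if (D) is strictly feasible and (P) is feasible, then val(P) = val(D)
and the primal solution set is nonempty, convex and bounded. -/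
lemma strongDualP
    {X Y : Type*} [NormedAddCommGroup X] [NormedSpace ℝ X]
    [NormedAddCommGroup Y] [NormedSpace ℝ Y]
    (hXrefl : Function.Surjective (NormedSpace.inclusionInDoubleDual ℝ X))
    (A : X →L[ℝ] (Y →L[ℝ] ℝ))
    (C : Set X) (K : Set Y)
    (hCcone : ∀ (r : ℝ), 0 ≤ r → ∀ x ∈ C, r • x ∈ C) (hCconv : Convex ℝ C)
    (hCclosed : IsClosed C)
    (hKcone : ∀ (r : ℝ), 0 ≤ r → ∀ y ∈ K, r • y ∈ K) (hKconv : Convex ℝ K)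
    (c : X →L[ℝ] ℝ) (b : Y →L[ℝ] ℝ)
    (x₀ : X) (hx₀C : x₀ ∈ C) (hx₀ : ∀ y ∈ K, 0 ≤ (A x₀ - b) y)
    (y₀ : Y) (hy₀K : y₀ ∈ K)
    (hy₀ : -(A.flip y₀) + c ∈ interior {w : X →L[ℝ] ℝ | ∀ x ∈ C, 0 ≤ w x})
    (FP : Set X) (hFP : FP = {x | x ∈ C ∧ A x - b ∈ {z : Y →L[ℝ] ℝ | ∀ y ∈ K, 0 ≤ z y}})
    (FD : Set Y) (hFD : FD = {y | y ∈ K ∧ -(A.flip y) + c ∈ {w : X →L[ℝ] ℝ | ∀ x ∈ C, 0 ≤ w x}})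
    (vP vD : ℝ)
    (hvP : vP = sInf ((fun x => c x) '' FP)) (hvD : vD = sSup ((fun y => b y) '' FD))
    (SP : Set X) (hSP : SP = {x ∈ FP | c x = vP}) :
    vP = vD ∧ SP.Nonempty ∧ Convex ℝ SP ∧ Bornology.IsBounded SP := by
  have h0C : (0:X) ∈ C := by simpa using hCcone 0 le_rfl x₀ hx₀C
  have h0K : (0:Y) ∈ K := by simpa using hKcone 0 le_rfl y₀ hy₀K
  set w₀ : X →L[ℝ] ℝ := -(A.flip y₀) + c with hw₀
  have hw₀Cs : ∀ x ∈ C, 0 ≤ w₀ x := interior_subset hy₀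
  have hx₀FP : x₀ ∈ FP := by rw [hFP]; exact ⟨hx₀C, hx₀⟩
  have hy₀FD : y₀ ∈ FD := by rw [hFD]; exact ⟨hy₀K, hw₀Cs⟩
  -- weak duality
  have wd : ∀ x ∈ FP, ∀ y ∈ FD, b y ≤ c x := by
    intro x hx y hy
    rw [hFP] at hx; rw [hFD] at hy
    obtain ⟨hxC, hxK⟩ := hx
    obtain ⟨hyK, hyC⟩ := hy
    have h1 := hyC x hxC
    have h2 := hxK y hyK
    simp only [ContinuousLinearMap.add_apply, ContinuousLinearMap.neg_apply,
      ContinuousLinearMap.flip_apply, ContinuousLinearMap.sub_apply, Set.mem_setOf_eq] at h1 h2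
    linarith
  have hPne : ((fun x => c x) '' FP).Nonempty := ⟨c x₀, x₀, hx₀FP, rfl⟩
  have hDne : ((fun y => b y) '' FD).Nonempty := ⟨b y₀, y₀, hy₀FD, rfl⟩
  have bddBelowP : BddBelow ((fun x => c x) '' FP) := by
    refine ⟨b y₀, ?_⟩
    rintro a ⟨x, hx, rfl⟩
    exact wd x hx y₀ hy₀FD
  have bddAboveD : BddAbove ((fun y => b y) '' FD) := by
    refine ⟨c x₀, ?_⟩
    rintro a ⟨y, hy, rfl⟩
    exact wd x₀ hx₀FP y hy
  have hvDleP : vD ≤ vP := by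
    rw [hvD, hvP]
    apply csSup_le hDne
    rintro a ⟨y, hy, rfl⟩
    apply le_csInf hPne
    rintro a' ⟨x, hx, rfl⟩
    exact wd x hx y hy
  -- coercivity
  obtain ⟨ε, hε, hco⟩ := coercive_of_mem_interior hy₀
  have hgrow : ∀ x ∈ FP, ε * ‖x‖ + b y₀ ≤ c x := by
    intro x hx
    rw [hFP] at hx
    obtain ⟨hxC, hxK⟩ := hx
    have h1 := hco x hxC
    have h2 := hxK y₀ hy₀K
    simp only [hw₀, ContinuousLinearMap.add_apply, ContinuousLinearMap.neg_apply,
      ContinuousLinearMap.flip_apply, ContinuousLinearMap.sub_apply, Set.mem_setOf_eq] at h1 h2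
    linarith
  -- no duality gap: vP ≤ vD
  have hPleD : vP ≤ vD := by
    apply le_of_forall_pos_le_add
    intro δ hδ
    set E : Set ((X →L[ℝ] ℝ) × ℝ) :=
      {p | ∃ y ∈ K, ∃ w : X →L[ℝ] ℝ, (∀ x ∈ C, 0 ≤ w x) ∧ p.1 + A.flip y + w = c ∧ p.2 ≤ b y}
      with hE
    have hEconv : Convex ℝ E := by
      rintro ⟨p1, p2⟩ ⟨y₁, hy₁, w₁, hw₁, he₁, hs₁⟩ ⟨q1, q2⟩ ⟨y₂, hy₂, w₂, hw₂, he₂, hs₂⟩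
        a a' ha ha' haa
      refine ⟨a • y₁ + a' • y₂, hKconv hy₁ hy₂ ha ha' haa, a • w₁ + a' • w₂, ?_, ?_, ?_⟩
      · intro x hx
        simp only [ContinuousLinearMap.add_apply, ContinuousLinearMap.smul_apply, smul_eq_mul]
        exact add_nonneg (mul_nonneg ha (hw₁ x hx)) (mul_nonneg ha' (hw₂ x hx))
      · show (a • (p1, p2) + a' • (q1, q2)).1 + A.flip (a • y₁ + a' • y₂) + (a • w₁ + a' • w₂) = c
        simp only [Prod.smul_mk, Prod.mk_add_mk]
        ext x
        have e₁ : p1 x + A.flip y₁ x + w₁ x = c x := by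
          have := congrArg (fun z => z x) he₁
          simpa using this
        have e₂ : q1 x + A.flip y₂ x + w₂ x = c x := by
          have := congrArg (fun z => z x) he₂
          simpa using this
        have e₃ : (A x) (a • y₁ + a' • y₂) = a * A x y₁ + a' * A x y₂ := by
          simp [map_add, map_smul]
        simp only [ContinuousLinearMap.add_apply, ContinuousLinearMap.smul_apply, smul_eq_mul,
          ContinuousLinearMap.flip_apply, e₃]
        simp only [ContinuousLinearMap.flip_apply] at e₁ e₂
        linear_combination a * e₁ + a' * e₂ + c x * haa
      · show (a • (p1, p2) + a' • (q1, q2)).2 ≤ b (a • y₁ + a' • y₂)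
        simp only [Prod.smul_mk, Prod.mk_add_mk, map_add, map_smul, smul_eq_mul]
        have := mul_le_mul_of_nonneg_left hs₁ ha
        have := mul_le_mul_of_nonneg_left hs₂ ha'
        linarith
    obtain ⟨ε'', hε'', hball2⟩ : ∃ r > (0:ℝ), Metric.ball w₀ r ⊆ {w : X →L[ℝ] ℝ | ∀ x ∈ C, 0 ≤ w x} := by
      rw [mem_interior_iff_mem_nhds, Metric.mem_nhds_iff] at hy₀
      obtain ⟨r, hr, h⟩ := hy₀; exact ⟨r, hr, h⟩
    have hsub : Metric.ball (0 : X →L[ℝ] ℝ) ε'' ×ˢ Set.Iio (b y₀) ⊆ E := by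
      rintro ⟨u', s⟩ ⟨hu', hs⟩
      refine ⟨y₀, hy₀K, w₀ - u', ?_, ?_, le_of_lt hs⟩
      · have hmem : w₀ - u' ∈ {w : X →L[ℝ] ℝ | ∀ x ∈ C, 0 ≤ w x} := by
          apply hball2
          rw [Metric.mem_ball, dist_eq_norm]
          have h1 : w₀ - u' - w₀ = -u' := by abel
          rw [h1, norm_neg]
          simpa [Metric.mem_ball, dist_eq_norm] using hu'
        exact hmem
      · show u' + A.flip y₀ + (w₀ - u') = c
        rw [hw₀]; abel
    have hq₀ : ((0 : X →L[ℝ] ℝ), b y₀ - 1) ∈ interior E := by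
      rw [mem_interior]
      refine ⟨_, hsub, (Metric.isOpen_ball).prod isOpen_Iio, ?_⟩
      refine ⟨Metric.mem_ball_self hε'', ?_⟩
      simp only [Set.mem_Iio]
      linarith
    have hp : ((0 : X →L[ℝ] ℝ), vD + δ) ∉ E := by
      rintro ⟨y, hy, w, hw, heq, hs⟩
      have hwdef : -(A.flip y) + c = w := by
        ext x
        have := congrArg (fun z => z x) heq
        simp only [ContinuousLinearMap.add_apply, ContinuousLinearMap.zero_apply,
          ContinuousLinearMap.neg_apply] at this ⊢
        linarith
      have hyFD : y ∈ FD := by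
        rw [hFD]
        exact ⟨hy, by rw [hwdef]; exact hw⟩
      have hble : b y ≤ vD := by
        rw [hvD]; exact le_csSup bddAboveD ⟨y, hyFD, rfl⟩
      simp only at hs
      linarith
    obtain ⟨F, hF⟩ := geometric_hahn_banach_open_point (hEconv.interior) isOpen_interior
      (fun h => hp (interior_subset h))
    -- extend the strict inequality from interior E to all of E
    have hleE : ∀ p ∈ E, F p ≤ F ((0 : X →L[ℝ] ℝ), vD + δ) := by
      intro p hpE
      by_contra hgt
      push_neg at hgt
      set q₀v : (X →L[ℝ] ℝ) × ℝ := ((0 : X →L[ℝ] ℝ), b y₀ - 1) with hq₀v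
      have hcombo : ∀ θ : ℝ, 0 < θ → θ < 1 → F (θ • q₀v + (1 - θ) • p) < F ((0 : X →L[ℝ] ℝ), vD + δ) := by
        intro θ h1 h2
        exact hF _ (hEconv.combo_interior_self_mem_interior hq₀ hpE h1 (by linarith) (by ring))
      have hval : ∀ θ : ℝ, F (θ • q₀v + (1 - θ) • p) = θ * F q₀v + (1 - θ) * F p := by
        intro θ
        rw [map_add, map_smul, map_smul, smul_eq_mul, smul_eq_mul]
      set d := F p - F ((0 : X →L[ℝ] ℝ), vD + δ) with hd
      have hdpos : 0 < d := by rw [hd]; linarith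
      set e := F p - F q₀v with he'
      rcases le_or_gt e 0 with hh | hh
      · have := hcombo (1/2) (by norm_num) (by norm_num)
        rw [hval] at this
        have : (1:ℝ)/2 * F q₀v + (1 - 1/2) * F p = F p - (1/2) * e := by rw [he']; ring
        have h3 := hcombo (1/2) (by norm_num) (by norm_num)
        rw [hval] at h3
        nlinarith
      · set θ := min (1/2 : ℝ) (d / (2 * e)) with hθ
        have hθpos : 0 < θ := lt_min (by norm_num) (by positivity)
        have hθlt : θ < 1 := lt_of_le_of_lt (min_le_left _ _) (by norm_num)
        have h3 := hcombo θ hθpos hθlt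
        rw [hval] at h3
        have h4 : θ * e ≤ d / 2 := by
          have h5 : θ ≤ d / (2 * e) := min_le_right _ _
          have := mul_le_mul_of_nonneg_right h5 (le_of_lt hh)
          rw [div_mul_eq_mul_div, mul_comm (2:ℝ) e, ← div_div, mul_div_assoc,
            div_self (ne_of_gt hh), mul_one] at this
          linarith
        nlinarith
    -- decompose F
    set γ : ℝ := F ((0 : X →L[ℝ] ℝ), 1) with hγdef
    have hFws : ∀ (w : X →L[ℝ] ℝ) (s : ℝ), F (w, s) = F (w, 0) + s * γ := by
      intro w s
      have h1 : ((w, s) : (X →L[ℝ] ℝ) × ℝ) = (w, 0) + ((0 : X →L[ℝ] ℝ), s) := by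
        simp [Prod.ext_iff]
      rw [h1, map_add]
      have h2 : (((0 : X →L[ℝ] ℝ), s) : (X →L[ℝ] ℝ) × ℝ) = s • ((0 : X →L[ℝ] ℝ), (1:ℝ)) := by
        simp [Prod.ext_iff]
      rw [h2, map_smul, smul_eq_mul]
    obtain ⟨xh, hxh⟩ := hXrefl (F.comp (ContinuousLinearMap.inl ℝ (X →L[ℝ] ℝ) ℝ))
    have hgw : ∀ w : X →L[ℝ] ℝ, F (w, 0) = w xh := by
      intro w
      have h1 : (NormedSpace.inclusionInDoubleDual ℝ X xh) w
          = (F.comp (ContinuousLinearMap.inl ℝ (X →L[ℝ] ℝ) ℝ)) w := by rw [hxh]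
      simpa [ContinuousLinearMap.comp_apply, ContinuousLinearMap.inl_apply] using h1.symm
    have hkey2 : ∀ y ∈ K, ∀ w : X →L[ℝ] ℝ, (∀ x ∈ C, 0 ≤ w x) → ∀ s : ℝ, s ≤ b y →
        (c - A.flip y - w) xh + s * γ ≤ (vD + δ) * γ := by
      intro y hy w hw s hs
      have hmem : ((c - A.flip y - w, s) : (X →L[ℝ] ℝ) × ℝ) ∈ E := by
        refine ⟨y, hy, w, hw, ?_, hs⟩
        show c - A.flip y - w + A.flip y + w = c
        abel
      have h1 := hleE _ hmem
      rw [hFws, hgw] at h1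
      rw [hFws, hgw] at h1
      simpa using h1
    have hγ0 : 0 ≤ γ := by
      have h20 : ∀ s : ℝ, s ≤ b y₀ → s * γ ≤ (vD + δ) * γ := by
        intro s hs
        have h1 := hkey2 y₀ hy₀K w₀ hw₀Cs s hs
        have hzero : c - A.flip y₀ - w₀ = 0 := by rw [hw₀]; abel
        rw [hzero] at h1
        simpa using h1
      by_contra hγ
      push_neg at hγ
      set s := min (b y₀) (((vD + δ) * γ + 1) / γ) with hs'
      have hs1 : s ≤ b y₀ := min_le_left _ _
      have h1 := h20 s hs1
      have hs2 : s ≤ ((vD + δ) * γ + 1) / γ := min_le_right _ _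
      have h3 : ((vD + δ) * γ + 1) / γ * γ = (vD + δ) * γ + 1 :=
        div_mul_cancel₀ _ (ne_of_lt hγ)
      have h4 : (((vD + δ) * γ + 1) / γ) * γ ≤ s * γ :=
        mul_le_mul_of_nonpos_right hs2 (le_of_lt hγ)
      rw [h3] at h4
      linarith
    have hxhC : xh ∈ C := by
      apply mem_of_dual_nonneg hCconv hCclosed h0C hCcone
      intro w₁ hw₁
      have hray : ∀ t : ℝ, 0 < t → t * (-(w₁ xh)) ≤ (vD + δ) * γ - (b y₀) * γ := by
        intro t ht
        have hwmem : ∀ x ∈ C, 0 ≤ (w₀ + t • w₁) x := by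
          intro x hx
          simp only [ContinuousLinearMap.add_apply, ContinuousLinearMap.smul_apply, smul_eq_mul]
          exact add_nonneg (hw₀Cs x hx) (mul_nonneg ht.le (hw₁ x hx))
        have h1 := hkey2 y₀ hy₀K (w₀ + t • w₁) hwmem (b y₀) le_rfl
        have hzero : c - A.flip y₀ - (w₀ + t • w₁) = -(t • w₁) := by rw [hw₀]; abel
        rw [hzero] at h1
        simp only [ContinuousLinearMap.neg_apply, ContinuousLinearMap.smul_apply,
          smul_eq_mul] at h1
        linarith
      have := ray_le hray
      linarith
    have hγpos : 0 < γ := by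
      rcases lt_or_eq_of_le hγ0 with h | h
      · exact h
      · exfalso
        have h5 := hF _ hq₀
        rw [hFws, hgw] at h5
        rw [hFws, hgw] at h5
        rw [← h] at h5
        simp at h5
    set xt : X := γ⁻¹ • xh with hxt
    have hxtC : xt ∈ C := hCcone _ (inv_nonneg.mpr hγpos.le) _ hxhC
    have hxtFP : xt ∈ FP := by
      rw [hFP]
      refine ⟨hxtC, ?_⟩
      intro y₁ hy₁
      have hray : ∀ t : ℝ, 0 < t → t * ((b y₁) * γ - A xh y₁) ≤ (vD + δ) * γ - c xh := by
        intro t ht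
        have hmemK := hKcone t ht.le y₁ hy₁
        have hble : t * b y₁ ≤ b (t • y₁) := by rw [map_smul, smul_eq_mul]
        have h1 := hkey2 (t • y₁) hmemK 0 (fun x hx => by simp) (t * b y₁) hble
        have h2 : (c - A.flip (t • y₁) - 0) xh = c xh - t * A xh y₁ := by
          simp only [map_smul, ContinuousLinearMap.sub_apply, ContinuousLinearMap.zero_apply,
            ContinuousLinearMap.smul_apply, ContinuousLinearMap.flip_apply, smul_eq_mul]
          ring
        rw [h2] at h1
        linarith
      have h3 := ray_le hray
      show 0 ≤ (A xt - b) y₁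
      have h4 : b y₁ * γ ≤ A xh y₁ := by linarith
      have h5 : γ⁻¹ * (b y₁ * γ) ≤ γ⁻¹ * A xh y₁ :=
        mul_le_mul_of_nonneg_left h4 (inv_nonneg.mpr hγpos.le)
      rw [mul_comm (b y₁) γ, ← mul_assoc, inv_mul_cancel₀ (ne_of_gt hγpos), one_mul] at h5
      simp only [hxt, map_smul, ContinuousLinearMap.sub_apply, ContinuousLinearMap.smul_apply,
        smul_eq_mul]
      linarith
    have hcxt : c xt ≤ vD + δ := by
      have hble : (0:ℝ) ≤ b 0 := by rw [map_zero]
      have h1 := hkey2 0 h0K 0 (fun x hx => by simp) 0 hble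
      have h2 : (c - A.flip 0 - 0) xh = c xh := by
        simp [map_zero]
      rw [h2] at h1
      have h3 : c xh ≤ (vD + δ) * γ := by linarith
      have h5 : γ⁻¹ * c xh ≤ γ⁻¹ * ((vD + δ) * γ) :=
        mul_le_mul_of_nonneg_left h3 (inv_nonneg.mpr hγpos.le)
      rw [mul_comm (vD + δ) γ, ← mul_assoc, inv_mul_cancel₀ (ne_of_gt hγpos), one_mul] at h5
      simp only [hxt, map_smul, smul_eq_mul]
      linarith
    have h6 : vP ≤ c xt := by
      rw [hvP]
      exact csInf_le bddBelowP ⟨xt, hxtFP, rfl⟩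
    linarith
  have hvPD : vP = vD := le_antisymm hPleD hvDleP
  -- convexity of the feasible set and of the solution set
  have hFPconv : Convex ℝ FP := by
    rw [hFP]
    rintro x ⟨hxC, hxK⟩ x' ⟨hx'C, hx'K⟩ a a' ha ha' haa
    refine ⟨hCconv hxC hx'C ha ha' haa, ?_⟩
    intro y hy
    have h1 := hxK y hy
    have h2 := hx'K y hy
    simp only [Set.mem_setOf_eq, ContinuousLinearMap.sub_apply] at h1 h2 ⊢
    have e₃ : (A (a • x + a' • x')) y = a * A x y + a' * A x' y := by
      simp [map_add, map_smul]
    rw [e₃]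
    have p1 := mul_nonneg ha (by linarith : (0:ℝ) ≤ A x y - b y)
    have p2 := mul_nonneg ha' (by linarith : (0:ℝ) ≤ A x' y - b y)
    have e4 : a * b y + a' * b y = b y := by rw [← add_mul, haa, one_mul]
    nlinarith [p1, p2, e4]
  have hSPconv : Convex ℝ SP := by
    rw [hSP]
    rintro x ⟨hx, hcx⟩ x' ⟨hx', hcx'⟩ a a' ha ha' haa
    refine ⟨hFPconv hx hx' ha ha' haa, ?_⟩
    show c (a • x + a' • x') = vP
    have e : c (a • x + a' • x') = a * c x + a' * c x' := by simp [map_add, map_smul]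
    rw [e, hcx, hcx', ← add_mul, haa, one_mul]
  have hSPbdd : Bornology.IsBounded SP := by
    apply (Metric.isBounded_closedBall (x := (0:X)) (r := (vP - b y₀)/ε)).subset
    intro x hx
    rw [hSP] at hx
    obtain ⟨hxFP, hcx⟩ := hx
    have h1 := hgrow x hxFP
    rw [hcx] at h1
    rw [Metric.mem_closedBall, dist_zero_right, le_div_iff₀ hε]
    nlinarith
  -- the truncated feasible set S'
  set S' : Set X := {x | x ∈ FP ∧ c x ≤ vP + 1} with hS'
  have hS'ne : S'.Nonempty := by
    have hlt : sInf ((fun x => c x) '' FP) < vP + 1 := by rw [← hvP]; linarith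
    obtain ⟨a, ⟨x, hx, rfl⟩, hab⟩ := exists_lt_of_csInf_lt hPne hlt
    exact ⟨x, hx, le_of_lt hab⟩
  have hS'conv : Convex ℝ S' := by
    rintro x ⟨hx, hcx⟩ x' ⟨hx', hcx'⟩ a a' ha ha' haa
    refine ⟨hFPconv hx hx' ha ha' haa, ?_⟩
    show c (a • x + a' • x') ≤ vP + 1
    have e : c (a • x + a' • x') = a * c x + a' * c x' := by simp [map_add, map_smul]
    rw [e]
    have e4 : a * (vP + 1) + a' * (vP + 1) = vP + 1 := by rw [← add_mul, haa, one_mul]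
    nlinarith [mul_le_mul_of_nonneg_left hcx ha, mul_le_mul_of_nonneg_left hcx' ha', e4]
  have hS'closed : IsClosed S' := by
    have hrep : S' = (C ∩ ⋂ y ∈ K, {x : X | 0 ≤ (A.flip y) x - b y}) ∩ {x : X | c x ≤ vP + 1} := by
      ext x
      simp only [hS', hFP, Set.mem_setOf_eq, Set.mem_inter_iff, Set.mem_iInter,
        ContinuousLinearMap.sub_apply, ContinuousLinearMap.flip_apply]
      try tauto
    rw [hrep]
    refine IsClosed.inter (IsClosed.inter hCclosed (isClosed_biInter fun y hy => ?_)) ?_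
    · exact isClosed_le continuous_const ((A.flip y).continuous.sub continuous_const)
    · exact isClosed_le c.continuous continuous_const
  have hS'sub : ∀ x ∈ S', ‖x‖ ≤ (vP + 1 - b y₀)/ε := by
    rintro x ⟨hxFP, hcx⟩
    have h1 := hgrow x hxFP
    rw [le_div_iff₀ hε]
    nlinarith
  -- compactness via Banach-Alaoglu and reflexivity
  set J := NormedSpace.inclusionInDoubleDual ℝ X with hJ
  set Q : Set (WeakDual ℝ (X →L[ℝ] ℝ)) :=
    (fun x => StrongDual.toWeakDual (J x)) '' S' with hQ
  have hQcl : IsClosed Q := by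
    apply isClosed_of_closure_subset
    intro F hFcl
    obtain ⟨x₁, hx₁⟩ := hXrefl (WeakDual.toStrongDual F)
    have hFg : ∀ g : X →L[ℝ] ℝ, F g = g x₁ := by
      intro g
      have : (J x₁) g = g x₁ := rfl
      rw [← this, hx₁]
      rfl
    have hx₁S : x₁ ∈ S' := by
      by_contra hnot
      obtain ⟨g, u', hg1, hg2⟩ := geometric_hahn_banach_closed_point hS'conv hS'closed hnot
      have hopen : IsOpen {G : WeakDual ℝ (X →L[ℝ] ℝ) | u' < G g} :=
        isOpen_lt continuous_const (WeakDual.eval_continuous g)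
      have hFin : F ∈ {G : WeakDual ℝ (X →L[ℝ] ℝ) | u' < G g} := by
        show u' < F g
        rw [hFg]
        exact hg2
      obtain ⟨G', hG'mem, hG'Q⟩ := mem_closure_iff.mp hFcl _ hopen hFin
      obtain ⟨x₂, hx₂S, rfl⟩ := hG'Q
      have h2 : u' < g x₂ := by
        exact hG'mem
      have h3 := hg1 x₂ hx₂S
      linarith
    refine ⟨x₁, hx₁S, ?_⟩
    show StrongDual.toWeakDual (J x₁) = F
    rw [hx₁]
    rfl
  have hQsub : Q ⊆ WeakDual.toStrongDual ⁻¹' Metric.closedBall 0 ((vP + 1 - b y₀)/ε) := by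
    rintro _ ⟨x, hxS, rfl⟩
    simp only [Set.mem_preimage, Metric.mem_closedBall, dist_zero_right]
    have h1 : ‖J x‖ ≤ ‖x‖ := NormedSpace.double_dual_bound ℝ X x
    have h2 := hS'sub x hxS
    have h3 := le_trans h1 h2
    exact le_trans (le_of_eq (dist_zero_right (J x : StrongDual ℝ (StrongDual ℝ X)))) h3
  have hQcomp : IsCompact Q :=
    (WeakDual.isCompact_closedBall (0 : StrongDual ℝ (X →L[ℝ] ℝ)) ((vP + 1 - b y₀)/ε)).of_isClosed_subset hQcl hQsub
  have hQne : Q.Nonempty := hS'ne.image _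
  obtain ⟨G₀, hG₀Q, hG₀min⟩ := hQcomp.exists_isMinOn hQne
    ((WeakDual.eval_continuous c).continuousOn)
  obtain ⟨xm, hxmS, hxmG⟩ := hG₀Q
  have hxmmin : ∀ x ∈ S', c xm ≤ c x := by
    intro x hx
    have h1 := isMinOn_iff.mp hG₀min _ (Set.mem_image_of_mem _ hx)
    rw [← hxmG] at h1
    exact h1
  have hxmFP : xm ∈ FP := hxmS.1
  have hxmval : c xm = vP := by
    apply le_antisymm
    · rw [hvP]
      apply le_csInf hPne
      rintro a ⟨x, hx, rfl⟩
      rcases le_or_gt (c x) (vP + 1) with h | h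
      · exact hxmmin x ⟨hx, h⟩
      · have := hxmS.2
        linarith
    · rw [hvP]
      exact csInf_le bddBelowP ⟨xm, hxmFP, rfl⟩
  exact ⟨hvPD, ⟨xm, by rw [hSP]; exact ⟨hxmFP, hxmval⟩⟩, hSPconv, hSPbdd⟩
/-- Theorem 4.1(ii): if {(P),(D)} is consistent, the game G = (α,β,A)
has value v = 0, and B^I ∩ c^⊥ = ∅ or B^II ∩ b^⊥ = ∅, then at least one of (P),(D) is
strictly feasible; in fact val(P) = val(D) and at least one of S(P), S(D) is nonempty,
convex and bounded. -/
theorem stmt9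
    {X Y : Type*} [NormedAddCommGroup X] [NormedSpace ℝ X] [CompleteSpace X]
    [NormedAddCommGroup Y] [NormedSpace ℝ Y] [CompleteSpace Y]
    -- reflexivity of X and Y
    (hXrefl : Function.Surjective (NormedSpace.inclusionInDoubleDual ℝ X))
    (hYrefl : Function.Surjective (NormedSpace.inclusionInDoubleDual ℝ Y))
    (A : X →L[ℝ] (Y →L[ℝ] ℝ))
    -- closed convex cones C, K with solid dual cones
    (C : Set X) (K : Set Y)
    (hCcone : ∀ (r : ℝ), 0 ≤ r → ∀ x ∈ C, r • x ∈ C) (hCconv : Convex ℝ C)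
    (hCclosed : IsClosed C)
    (hKcone : ∀ (r : ℝ), 0 ≤ r → ∀ y ∈ K, r • y ∈ K) (hKconv : Convex ℝ K)
    (hKclosed : IsClosed K)
    (Cstar : Set (X →L[ℝ] ℝ)) (hCstar : Cstar = {w : X →L[ℝ] ℝ | ∀ x ∈ C, 0 ≤ w x})
    (Kstar : Set (Y →L[ℝ] ℝ)) (hKstar : Kstar = {z : Y →L[ℝ] ℝ | ∀ y ∈ K, 0 ≤ z y})
    -- data of the programs and consistency
    (c : X →L[ℝ] ℝ) (b : Y →L[ℝ] ℝ)
    (FeasP : Set X) (hFeasP : FeasP = {x | x ∈ C ∧ A x - b ∈ Kstar})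
    (FeasD : Set Y) (hFeasD : FeasD = {y | y ∈ K ∧ -(A.flip y) + c ∈ Cstar})
    (hPne : FeasP.Nonempty) (hDne : FeasD.Nonempty)
    (valP valD : ℝ)
    (hvalP : valP = sInf ((fun x => c x) '' FeasP))
    (hvalD : valD = sSup ((fun y => b y) '' FeasD))
    (SolP : Set X) (hSolP : SolP = {x ∈ FeasP | c x = valP})
    (SolD : Set Y) (hSolD : SolD = {y ∈ FeasD | b y = valD})
    -- the game G = (α,β,A) with α ∈ int C*, β ∈ int K*
    (α : X →L[ℝ] ℝ) (hα : α ∈ interior Cstar)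
    (β : Y →L[ℝ] ℝ) (hβ : β ∈ interior Kstar)
    (S : Set X) (hS : S = {x ∈ C | α x = 1})
    (T : Set Y) (hT : T = {y ∈ K | β y = 1})
    -- finite security levels (F3)
    (hSne : S.Nonempty) (hTne : T.Nonempty)
    (hbb : ∀ x ∈ S, BddBelow ((fun y => A x y) '' T))
    (hba : BddAbove ((fun x => sInf ((fun y => A x y) '' T)) '' S))
    (hba' : ∀ y ∈ T, BddAbove ((fun x => A x y) '' S))
    (hbb' : BddBelow ((fun y => sSup ((fun x => A x y) '' S)) '' T))
    -- v is the value of the game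
    (v : ℝ)
    (hv : v = sSup ((fun x => sInf ((fun y => A x y) '' T)) '' S))
    (hv' : v = sInf ((fun y => sSup ((fun x => A x y) '' S)) '' T))
    -- sets of optimal strategies and the orthogonal complements c^⊥, b^⊥
    (BI : Set X) (hBI : BI = {x ∈ S | sInf ((fun y => A x y) '' T) = v})
    (BII : Set Y) (hBII : BII = {y ∈ T | sSup ((fun x => A x y) '' S) = v})
    (cperp : Set X) (hcperp : cperp = {x : X | c x = 0})
    (bperp : Set Y) (hbperp : bperp = {y : Y | b y = 0})
    -- hypotheses of part (ii): v = 0 and B^I ∩ c^⊥ = ∅ or B^II ∩ b^⊥ = ∅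
    (hv0 : v = 0)
    (hempty : BI ∩ cperp = ∅ ∨ BII ∩ bperp = ∅) :
    -- at least one of (P), (D) is strictly feasible
    ((∃ x ∈ C, A x - b ∈ interior Kstar) ∨ (∃ y ∈ K, -(A.flip y) + c ∈ interior Cstar)) ∧
    -- val(P) = val(D)
    valP = valD ∧
    -- at least one of S(P), S(D) is nonempty, convex and bounded
    ((SolP.Nonempty ∧ Convex ℝ SolP ∧ Bornology.IsBounded SolP) ∨
     (SolD.Nonempty ∧ Convex ℝ SolD ∧ Bornology.IsBounded SolD)) := by

  obtain ⟨x₀, hx₀⟩ := hPne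
  obtain ⟨y₀, hy₀⟩ := hDne
  rw [hFeasP] at hx₀
  rw [hFeasD] at hy₀
  have hx₀C : x₀ ∈ C := hx₀.1
  have hx₀K : ∀ y ∈ K, 0 ≤ (A x₀ - b) y := by
    have := hx₀.2; rw [hKstar] at this; exact this
  have hy₀K : y₀ ∈ K := hy₀.1
  have hy₀C : ∀ x ∈ C, 0 ≤ (-(A.flip y₀) + c) x := by
    have := hy₀.2; rw [hCstar] at this; exact this
  have hα' : α ∈ interior {w : X →L[ℝ] ℝ | ∀ x ∈ C, 0 ≤ w x} := by rw [← hCstar]; exact hα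
  have hβ' : β ∈ interior {z : Y →L[ℝ] ℝ | ∀ y ∈ K, 0 ≤ z y} := by rw [← hKstar]; exact hβ
  rcases hempty with hBIe | hBIIe
  · -- Case B^I ∩ c^⊥ = ∅ : (D) is strictly feasible
    have hkey : ∀ x ∈ C, x ≠ 0 → (∀ y ∈ K, 0 ≤ A x y) → c x ≠ 0 := by
      intro x hxC hxne hAx
      obtain ⟨ε, hε, hcoα⟩ := coercive_of_mem_interior hα'
      have hnx : 0 < ‖x‖ := norm_pos_iff.mpr hxne
      have hαx : 0 < α x := lt_of_lt_of_le (mul_pos hε hnx) (hcoα x hxC)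
      set xb := (α x)⁻¹ • x with hxb
      have hxbS : xb ∈ S := by
        rw [hS]
        refine ⟨hCcone _ (inv_nonneg.mpr hαx.le) _ hxC, ?_⟩
        simp [hxb, map_smul, smul_eq_mul, inv_mul_cancel₀ (ne_of_gt hαx)]
      have hTK : ∀ y ∈ T, y ∈ K := by intro y hy; rw [hT] at hy; exact hy.1
      have h1 : 0 ≤ sInf ((fun y => A xb y) '' T) := by
        apply le_csInf (hTne.image _)
        rintro a ⟨y, hyT, rfl⟩
        show (0:ℝ) ≤ A xb y
        have h2 := hAx y (hTK y hyT)
        have e : A xb y = (α x)⁻¹ * A x y := by simp [hxb, map_smul, smul_eq_mul]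
        rw [e]
        exact mul_nonneg (inv_nonneg.mpr hαx.le) h2
      have h2 : sInf ((fun y => A xb y) '' T) ≤ v := by
        rw [hv]; exact le_csSup hba ⟨xb, hxbS, rfl⟩
      have h3 : sInf ((fun y => A xb y) '' T) = v := by
        apply le_antisymm h2
        rw [hv0]; exact h1
      have hxbBI : xb ∈ BI := by rw [hBI]; exact ⟨hxbS, h3⟩
      have hxbnc : xb ∉ cperp := by
        intro hc
        have hmem : xb ∈ BI ∩ cperp := ⟨hxbBI, hc⟩
        rw [hBIe] at hmem
        exact hmem
      rw [hcperp] at hxbnc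
      intro hcx
      apply hxbnc
      show c xb = 0
      simp [hxb, map_smul, smul_eq_mul, hcx]
    obtain ⟨y₁, hy₁K, hy₁int⟩ := strictFeasD hXrefl A C K hCcone hCconv hCclosed hKcone hKconv
      c b α hα' x₀ hx₀C hx₀K y₀ hy₀K hy₀C hkey
    obtain ⟨hgap, hne, hconv, hbdd⟩ := strongDualP hXrefl A C K hCcone hCconv hCclosed hKcone
      hKconv c b x₀ hx₀C hx₀K y₁ hy₁K hy₁int FeasP (by rw [hFeasP, hKstar]) FeasD
      (by rw [hFeasD, hCstar]) valP valD hvalP hvalD SolP hSolP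
    exact ⟨Or.inr ⟨y₁, hy₁K, by rw [hCstar]; exact hy₁int⟩, hgap, Or.inl ⟨hne, hconv, hbdd⟩⟩
  · -- Case B^II ∩ b^⊥ = ∅ : (P) is strictly feasible; apply the lemmas to the swapped data
    set B : Y →L[ℝ] (X →L[ℝ] ℝ) := (-A).flip with hB
    have hBapp : ∀ (y : Y) (x : X), B y x = -(A x y) := by
      intro y x
      simp [hB, ContinuousLinearMap.flip_apply, ContinuousLinearMap.neg_apply]
    have hBflip : ∀ (x : X) (y : Y), B.flip x y = -(A x y) := by
      intro x y
      simp [hB, ContinuousLinearMap.flip_apply, ContinuousLinearMap.neg_apply]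
    have hy₀B : ∀ x ∈ C, 0 ≤ (B y₀ - (-c)) x := by
      intro x hx
      have h1 := hy₀C x hx
      simp only [ContinuousLinearMap.sub_apply, ContinuousLinearMap.neg_apply, hBapp,
        ContinuousLinearMap.add_apply, ContinuousLinearMap.flip_apply] at h1 ⊢
      linarith
    have hx₀B : ∀ y ∈ K, 0 ≤ (-(B.flip x₀) + (-b)) y := by
      intro y hy
      have h1 := hx₀K y hy
      simp only [ContinuousLinearMap.sub_apply, ContinuousLinearMap.neg_apply, hBflip,
        ContinuousLinearMap.add_apply] at h1 ⊢
      linarith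
    have hkey2 : ∀ y ∈ K, y ≠ 0 → (∀ x ∈ C, 0 ≤ B y x) → (-b) y ≠ 0 := by
      intro y hyK hyne hBy
      obtain ⟨ε, hε, hcoβ⟩ := coercive_of_mem_interior hβ'
      have hny : 0 < ‖y‖ := norm_pos_iff.mpr hyne
      have hβy : 0 < β y := lt_of_lt_of_le (mul_pos hε hny) (hcoβ y hyK)
      set yb := (β y)⁻¹ • y with hyb
      have hybT : yb ∈ T := by
        rw [hT]
        refine ⟨hKcone _ (inv_nonneg.mpr hβy.le) _ hyK, ?_⟩
        simp [hyb, map_smul, smul_eq_mul, inv_mul_cancel₀ (ne_of_gt hβy)]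
      have hSC : ∀ x ∈ S, x ∈ C := by intro x hx; rw [hS] at hx; exact hx.1
      have h1 : sSup ((fun x => A x yb) '' S) ≤ 0 := by
        apply csSup_le (hSne.image _)
        rintro a ⟨x, hxS, rfl⟩
        show A x yb ≤ (0:ℝ)
        have h2 := hBy x (hSC x hxS)
        rw [hBapp] at h2
        have e : A x yb = (β y)⁻¹ * A x y := by simp [hyb, map_smul, smul_eq_mul]
        rw [e]
        have h3 : A x y ≤ 0 := by linarith
        have := mul_le_mul_of_nonneg_left h3 (inv_nonneg.mpr hβy.le)
        simpa using this
      have h2 : v ≤ sSup ((fun x => A x yb) '' S) := by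
        rw [hv']; exact csInf_le hbb' ⟨yb, hybT, rfl⟩
      have h3 : sSup ((fun x => A x yb) '' S) = v := by
        apply le_antisymm _ h2
        rw [hv0]; exact h1
      have hybBII : yb ∈ BII := by rw [hBII]; exact ⟨hybT, h3⟩
      have hybnb : yb ∉ bperp := by
        intro hc
        have hmem : yb ∈ BII ∩ bperp := ⟨hybBII, hc⟩
        rw [hBIIe] at hmem
        exact hmem
      rw [hbperp] at hybnb
      simp only [ContinuousLinearMap.neg_apply, ne_eq, neg_eq_zero]
      intro hby
      apply hybnb
      show b yb = 0
      simp [hyb, map_smul, smul_eq_mul, hby]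
    obtain ⟨x₁, hx₁C, hx₁int⟩ := strictFeasD hYrefl B K C hKcone hKconv hKclosed hCcone hCconv
      (-b) (-c) β hβ' y₀ hy₀K hy₀B x₀ hx₀C hx₀B hkey2
    have hEqAll : ∀ x : X, -(B.flip x) + (-b) = A x - b := by
      intro x
      ext y
      simp [hBflip, sub_eq_add_neg]
    have hBc : ∀ y : Y, B y - (-c) = -(A.flip y) + c := by
      intro y
      ext x
      simp [hBapp]
    have hFD' : FeasD = {y | y ∈ K ∧ B y - (-c) ∈ {w : X →L[ℝ] ℝ | ∀ x ∈ C, 0 ≤ w x}} := by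
      rw [hFeasD, hCstar]
      ext y
      simp only [Set.mem_setOf_eq, hBc]
    have hFP' : FeasP = {x | x ∈ C ∧ -(B.flip x) + (-b) ∈ {z : Y →L[ℝ] ℝ | ∀ y ∈ K, 0 ≤ z y}} := by
      rw [hFeasP, hKstar]
      ext x
      simp only [Set.mem_setOf_eq, hEqAll]
    have himgD : (fun y => (-b) y) '' FeasD = -((fun y => b y) '' FeasD) := by
      ext a
      simp only [Set.mem_image, Set.mem_neg, ContinuousLinearMap.neg_apply]
      constructor
      · rintro ⟨y, hy, rfl⟩; exact ⟨y, hy, by ring⟩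
      · rintro ⟨y, hy, hval⟩; exact ⟨y, hy, by linarith⟩
    have himgP : (fun x => (-c) x) '' FeasP = -((fun x => c x) '' FeasP) := by
      ext a
      simp only [Set.mem_image, Set.mem_neg, ContinuousLinearMap.neg_apply]
      constructor
      · rintro ⟨x, hx, rfl⟩; exact ⟨x, hx, by ring⟩
      · rintro ⟨x, hx, hval⟩; exact ⟨x, hx, by linarith⟩
    have hvD' : -valD = sInf ((fun y => (-b) y) '' FeasD) := by
      rw [himgD, Real.sInf_def, neg_neg, hvalD]
    have hvP' : -valP = sSup ((fun x => (-c) x) '' FeasP) := by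
      rw [himgP, hvalP, Real.sInf_def, neg_neg]
    have hSolD' : SolD = {y ∈ FeasD | (-b) y = -valD} := by
      rw [hSolD]
      ext y
      simp only [Set.mem_setOf_eq, ContinuousLinearMap.neg_apply, neg_inj]
    obtain ⟨hgap, hne, hconv, hbdd⟩ := strongDualP hYrefl B K C hKcone hKconv hKclosed hCcone
      hCconv (-b) (-c) y₀ hy₀K hy₀B x₁ hx₁C hx₁int FeasD hFD' FeasP hFP' (-valD) (-valP)
      hvD' hvP' SolD hSolD'
    refine ⟨Or.inl ⟨x₁, hx₁C, ?_⟩, by linarith, Or.inr ⟨hne, hconv, hbdd⟩⟩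
    rw [hKstar, ← hEqAll x₁]
    exact hx₁int
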